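/- Let u ≥ 2, i ≥ 2, and k even with 4 ≤ k ≤ 2i. Set q = ⌊u·P_{2i+1}(u)/P_k(u)⌋ and r = P_{2i+1}(u) − q·(P_k(u)/u). Then for 0 ≤ p ≤ q: if u·r·P_{2i}(u) > (P_{k-2}(u)/u − (u²+1)·r)·P_{2i+1}(u), then g_p(P_{2i+1}(u), P_{2i+3}(u), P_{2i+k+1}(u)) = (r−1)·P_{2i+3}(u) + (q+p)·P_{2i+k+1}(u) − P_{2i+1}(u); otherwise g_p(P_{2i+1}(u), P_{2i+3}(u), P_{2i+k+1}(u)) = (P_k(u)/u − 1)·P_{2i+3}(u) + (q+p−1)·P_{2i+k+1}(u) − P_{2i+1}(u). -/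
import Mathlib

def pell (u : ℕ) : ℕ → ℕ
  | 0 => 0
  | 1 => 1
  | n + 2 => u * pell u (n + 1) + pell u n


noncomputable def reps (a b c m : ℕ) : ℕ :=
  Nat.card {t : ℕ × ℕ × ℕ // t.1 * a + t.2.1 * b + t.2.2 * c = m}

/-! ### Basic facts about `pell` -/

lemma pell_add_two (u n : ℕ) : pell u (n + 2) = u * pell u (n + 1) + pell u n := rfl

lemma pell_one_le (u : ℕ) (hu : 1 ≤ u) : ∀ n, 1 ≤ pell u (n + 1)
  | 0 => le_refl 1
  | n + 1 => by
    rw [pell_add_two]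
    have h := pell_one_le u hu n
    calc 1 ≤ 1 * pell u (n + 1) := by omega
    _ ≤ u * pell u (n + 1) := Nat.mul_le_mul_right _ hu
    _ ≤ _ := Nat.le_add_right _ _

lemma pell_mono (u : ℕ) (hu : 1 ≤ u) : Monotone (pell u) := by
  apply monotone_nat_of_le_succ
  intro n
  cases n with
  | zero => simp [pell]
  | succ n =>
    rw [pell_add_two]
    calc pell u (n + 1) = 1 * pell u (n + 1) := by omega
    _ ≤ u * pell u (n + 1) := Nat.mul_le_mul_right _ hu
    _ ≤ _ := Nat.le_add_right _ _

lemma pell_add (u : ℕ) :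
    ∀ n m, pell u (m + n + 1) = pell u (m + 1) * pell u (n + 1) + pell u m * pell u n
  | 0, m => by simp [pell]
  | 1, m => by
    have h1 : m + 1 + 1 = m + 2 := by omega
    rw [h1, pell_add_two]
    have h2 : pell u 2 = u := by
      rw [pell_add_two]; simp [pell]
    simp [pell, h2]; ring
  | n + 2, m => by
    have h1 := pell_add u (n + 1) m
    have h2 := pell_add u n m
    simp only [show m + (n + 1) + 1 = m + n + 1 + 1 from by omega] at h1
    have e3 := pell_add_two u (m + n + 1)
    have e4 := pell_add_two u (n + 1)
    have e5 := pell_add_two u n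
    simp only [show m + (n + 2) + 1 = m + n + 1 + 2 from by omega,
      show n + 2 + 1 = n + 1 + 2 from by omega]
    simp only [show n + 1 + 1 = n + 2 from by omega,
      show m + n + 1 + 1 = m + n + 2 from by omega] at h1 e3 e4 ⊢
    rw [e5] at h1
    rw [e3, h1, h2, e4, e5]
    ring

lemma pell_mod (u : ℕ) (hu : 2 ≤ u) : ∀ n, pell u (2 * n) % u = 0 ∧ pell u (2 * n + 1) % u = 1
  | 0 => by
    constructor
    · simp [pell]
    · show pell u 1 % u = 1
      have : pell u 1 = 1 := rfl
      rw [this]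
      exact Nat.mod_eq_of_lt (by omega)
  | n + 1 => by
    have ih := pell_mod u hu n
    have e1 : 2 * (n + 1) = 2 * n + 2 := by omega
    have e2 : 2 * n + 2 + 1 = (2 * n + 1) + 2 := by omega
    rw [e1, e2, pell_add_two, pell_add_two]
    constructor
    · rw [Nat.mul_add_mod]; exact ih.1
    · rw [Nat.mul_add_mod]; exact ih.2

lemma pell_coprime (u : ℕ) : ∀ n, Nat.Coprime (pell u n) (pell u (n + 1))
  | 0 => by simp [pell, Nat.coprime_zero_left]
  | n + 1 => by
    have ih := pell_coprime u n
    rw [pell_add_two]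
    have : Nat.Coprime (pell u (n + 1)) (pell u n + pell u (n + 1) * u) :=
      (Nat.coprime_add_mul_left_right _ _ _).mpr ih.symm
    have e : pell u n + pell u (n + 1) * u = u * pell u (n + 1) + pell u n := by ring
    rw [e] at this
    exact this

/-! ### Counting lemmas for `reps` -/

lemma reps_le_of_inj (a b c m N : ℕ)
    (f : {t : ℕ × ℕ × ℕ // t.1 * a + t.2.1 * b + t.2.2 * c = m} → Fin N)
    (hf : Function.Injective f) : reps a b c m ≤ N := by
  have h := Nat.card_le_card_of_injective f hf
  simpa [reps] using h

lemma le_reps_of_inj (a b c m N : ℕ) (ha : 0 < a) (hb : 0 < b) (hc : 0 < c)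
    (f : Fin N → {t : ℕ × ℕ × ℕ // t.1 * a + t.2.1 * b + t.2.2 * c = m})
    (hf : Function.Injective f) : N ≤ reps a b c m := by
  haveI : Finite {t : ℕ × ℕ × ℕ // t.1 * a + t.2.1 * b + t.2.2 * c = m} := by
    apply Finite.of_injective (β := Fin (m + 1) × Fin (m + 1) × Fin (m + 1))
      (fun t => (⟨t.1.1, by have h := t.2; nlinarith [t.1.1, t.2]⟩,
                 ⟨t.1.2.1, by have h := t.2; nlinarith⟩,
                 ⟨t.1.2.2, by have h := t.2; nlinarith⟩))
    intro t1 t2 h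
    simp only [Prod.mk.injEq, Fin.mk.injEq] at h
    apply Subtype.ext
    exact Prod.ext h.1 (Prod.ext h.2.1 h.2.2)
  have h := Nat.card_le_card_of_injective f hf
  simpa [reps] using h

/-! ### The abstract lemma -/

set_option maxHeartbeats 2000000 in
theorem abstract_isg (a b c L E q r p t0 s0 : ℕ)
    (ha : 0 < a) (hab : a < b)
    (hgcd : Nat.Coprime a b)
    (hLb : L * b = c + E * a)
    (haqr : a = q * L + r) (hrL : r < L) (hL2 : 2 ≤ L)
    (hEc : E * a ≤ c) (hEa1 : 1 ≤ E * a)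
    (hq1 : 1 ≤ q) (hp : p ≤ q)
    (ht0L : t0 < L)
    (hG1 : 1 ≤ r → (r - 1) * b + (q + p) * c ≤ t0 * b + s0 * c)
    (hG2 : (L - 1) * b + (q + p - 1) * c ≤ t0 * b + s0 * c)
    (hN0 : s0 * L + t0 < a + p * L) :
    IsGreatest {m : ℕ | reps a b c m ≤ p} (t0 * b + s0 * c - a) := by
  have hb : 0 < b := lt_of_le_of_lt (Nat.zero_le a) hab
  have hc : 0 < c := lt_of_lt_of_le hEa1 hEc
  have hL0 : 0 < L := by omega
  set G := t0 * b + s0 * c with hG_def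
  set N0 := s0 * L + t0 with hN0_def
  have haG : a ≤ G := by
    have h1 : b ≤ (L - 1) * b := by
      calc b = 1 * b := (one_mul b).symm
      _ ≤ (L - 1) * b := Nat.mul_le_mul_right b (by omega)
    have h2 := hG2
    omega
  have hGa : G - a + a = G := Nat.sub_add_cancel haG
  have hLbZ : (L : ℤ) * b = c + E * a := by exact_mod_cast hLb
  haveI : NeZero a := ⟨ha.ne'⟩
  -- value identity for ladder pairs
  have val_id : ∀ t s j : ℕ, j ≤ s →
      (t + j * L) * b + (s - j) * c = t * b + s * c + j * (E * a) := by
    intro t s j hj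
    obtain ⟨w, rfl⟩ := Nat.exists_eq_add_of_le hj
    have h2 : j + w - j = w := by omega
    rw [h2]
    calc (t + j * L) * b + w * c = t * b + j * (L * b) + w * c := by ring
    _ = t * b + j * (c + E * a) + w * c := by rw [hLb]
    _ = t * b + (j + w) * c + j * (E * a) := by ring
  -- claim C: any pair in the class of N0 at level ≥ N0 has value ≥ G
  have claimC : ∀ M y z : ℕ, y + z * L = N0 + M * a → G ≤ y * b + z * c := by
    intro M
    induction M with
    | zero =>
      intro y z h
      rw [Nat.zero_mul, Nat.add_zero] at h
      have hz : z ≤ s0 := by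
        by_contra hzz
        push_neg at hzz
        have h3 : (s0 + 1) * L ≤ z * L := Nat.mul_le_mul_right L hzz
        have e : (s0 + 1) * L = s0 * L + L := by ring
        omega
      obtain ⟨w, hw⟩ := Nat.exists_eq_add_of_le hz
      have e1 : s0 * L = z * L + w * L := by rw [hw]; ring
      have hy : y = w * L + t0 := by omega
      have e2 : (w * L + t0) * b + z * c = t0 * b + (z + w) * c + w * (E * a) := by
        calc (w * L + t0) * b + z * c = w * (L * b) + t0 * b + z * c := by ring
        _ = w * (c + E * a) + t0 * b + z * c := by rw [hLb]
        _ = t0 * b + (z + w) * c + w * (E * a) := by ring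
      have e3 : (z + w) * c = s0 * c := by rw [hw]
      rw [hy, e2, e3]
      omega
    | succ M ih =>
      intro y z h
      have hMa : (M + 1) * a = M * a + a := by ring
      by_cases h1 : q ≤ z ∧ r ≤ y
      · obtain ⟨hqz, hry⟩ := h1
        have e1 : (z - q) * L = z * L - q * L := Nat.sub_mul z q L
        have e2 : q * L ≤ z * L := Nat.mul_le_mul_right L hqz
        have hstep : (y - r) + (z - q) * L = N0 + M * a := by omega
        have h2 := ih (y - r) (z - q) hstep
        have h3 : (y - r) * b ≤ y * b := Nat.mul_le_mul_right b (Nat.sub_le y r)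
        have h4 : (z - q) * c ≤ z * c := Nat.mul_le_mul_right c (Nat.sub_le z q)
        omega
      · push_neg at h1
        by_cases h2 : z < q
        · have e1 : y * b + z * c + z * (E * a) = (N0 + (M + 1) * a) * b := by
            calc y * b + z * c + z * (E * a) = y * b + z * (c + E * a) := by ring
            _ = y * b + z * (L * b) := by rw [hLb]
            _ = (y + z * L) * b := by ring
            _ = (N0 + (M + 1) * a) * b := by rw [h]
          have g1 : G ≤ N0 * b := by
            have e : N0 * b = t0 * b + s0 * c + s0 * (E * a) := by
              calc N0 * b = s0 * (L * b) + t0 * b := by rw [hN0_def]; ring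
              _ = s0 * (c + E * a) + t0 * b := by rw [hLb]
              _ = t0 * b + s0 * c + s0 * (E * a) := by ring
            omega
          have g2 : z * (E * a) ≤ a * b := by
            calc z * (E * a) ≤ q * (E * a) := Nat.mul_le_mul_right _ (le_of_lt h2)
            _ ≤ q * (L * b) := Nat.mul_le_mul_left _ (by omega)
            _ = (q * L) * b := by ring
            _ ≤ a * b := Nat.mul_le_mul_right _ (by omega)
          have g3 : N0 * b + a * b ≤ (N0 + (M + 1) * a) * b := by
            have e : (N0 + (M + 1) * a) * b = N0 * b + M * (a * b) + a * b := by ring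
            omega
          omega
        · have hqz : q ≤ z := le_of_not_gt h2
          have hyr : y < r := h1 hqz
          have hz : s0 + q + 1 ≤ z := by
            by_contra hzz
            push_neg at hzz
            have h3 : z * L ≤ (s0 + q) * L := Nat.mul_le_mul_right L (by omega)
            have e : (s0 + q) * L = s0 * L + q * L := by ring
            omega
          have g1 : (s0 + q + 1) * c ≤ z * c := Nat.mul_le_mul_right c hz
          have g2 : t0 * b + b ≤ L * b := by
            have h3 : (t0 + 1) * b ≤ L * b := Nat.mul_le_mul_right b (by omega)
            calc t0 * b + b = (t0 + 1) * b := by ring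
            _ ≤ L * b := h3
          have g3 : c ≤ q * c := by
            calc c = 1 * c := (one_mul c).symm
            _ ≤ q * c := Nat.mul_le_mul_right c hq1
          have e4 : (s0 + q + 1) * c = s0 * c + q * c + c := by ring
          omega
  -- divisibility of value differences
  have hdvd_val : ∀ y z : ℕ, (a : ℤ) ∣ ((y : ℤ) + z * L) * b - (y * b + z * c) := by
    intro y z
    refine ⟨(z * E : ℤ), ?_⟩
    linear_combination (z : ℤ) * hLbZ
  have hcop : IsCoprime (a : ℤ) (b : ℤ) := Nat.isCoprime_iff_coprime.mpr hgcd
  -- characterization of solutions at g = G - a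
  have solg : ∀ x y z : ℕ, x * a + y * b + z * c = G - a →
      y + z * L < p * L ∧ (a : ℤ) ∣ ((y : ℤ) + z * L) - N0 := by
    intro x y z hxyz
    have hval : y * b + z * c ≤ G - a := by omega
    have hvalZ : (y : ℤ) * b + z * c = (G : ℤ) - a - x * a := by
      have h5 := congrArg (fun v : ℕ => (v : ℤ)) hxyz
      simp only [Nat.cast_sub haG] at h5
      push_cast at h5
      linarith
    have hd1 : (a : ℤ) ∣ (N0 : ℤ) * b - G := by
      refine ⟨(s0 * E : ℤ), ?_⟩
      have e1 : (N0 : ℤ) = s0 * L + t0 := by exact_mod_cast hN0_def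
      have e2 : (G : ℤ) = t0 * b + s0 * c := by exact_mod_cast hG_def
      rw [e1, e2]
      linear_combination (s0 : ℤ) * hLbZ
    have hd3 : (a : ℤ) ∣ (((y : ℤ) + z * L) - N0) * b := by
      have d1 := hdvd_val y z
      have e : (((y : ℤ) + z * L) - N0) * b =
          (((y : ℤ) + z * L) * b - ((y : ℤ) * b + z * c)) - ((N0 : ℤ) * b - G)
          + (((y : ℤ) * b + z * c) - G) := by ring
      rw [e]
      refine dvd_add (dvd_sub d1 hd1) ?_
      rw [hvalZ]
      exact ⟨-1 - x, by ring⟩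
    have hd4 : (a : ℤ) ∣ ((y : ℤ) + z * L) - N0 := hcop.dvd_of_dvd_mul_right hd3
    refine ⟨?_, hd4⟩
    obtain ⟨d, hd⟩ := hd4
    rcases lt_or_ge d 0 with hdneg | hdpos
    · have haZ : (0 : ℤ) ≤ a := by positivity
      have h8 : d * a ≤ (-1) * a := mul_le_mul_of_nonneg_right (by omega) haZ
      have hle : (y : ℤ) + z * L ≤ (N0 : ℤ) - a := by linarith [hd]
      have hN0Z : (N0 : ℤ) < a + p * L := by exact_mod_cast hN0
      have : ((y : ℕ) + z * L : ℕ) < p * L := by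
        have : (y : ℤ) + z * L < (p : ℤ) * L := by linarith
        exact_mod_cast this
      omega
    · exfalso
      have hZ : (y : ℤ) + z * L = (N0 : ℤ) + (d.toNat : ℤ) * a := by
        rw [Int.toNat_of_nonneg hdpos]; linarith [hd]
      have hyz : y + z * L = N0 + d.toNat * a := by exact_mod_cast hZ
      have h6 := claimC d.toNat y z hyz
      omega
  constructor
  · -- membership : reps a b c (G - a) ≤ p
    show reps a b c (G - a) ≤ p
    have hzlt : ∀ (t : {t : ℕ × ℕ × ℕ // t.1 * a + t.2.1 * b + t.2.2 * c = G - a}),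
        t.1.2.2 < p := by
      rintro ⟨⟨x, y, z⟩, ht⟩
      have h := (solg x y z ht).1
      have h2 : z * L < p * L := by omega
      exact Nat.lt_of_mul_lt_mul_right h2
    apply reps_le_of_inj a b c (G - a) p (fun t => ⟨t.1.2.2, hzlt t⟩)
    rintro ⟨⟨x1, y1, z1⟩, h1⟩ ⟨⟨x2, y2, z2⟩, h2⟩ hf
    simp only [Fin.mk.injEq] at hf
    obtain ⟨hb1, hd1⟩ := solg x1 y1 z1 h1
    obtain ⟨hb2, hd2⟩ := solg x2 y2 z2 h2
    have hpa : p * L ≤ a := by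
      have e : p * L ≤ q * L := Nat.mul_le_mul_right L hp
      omega
    have hy : y1 = y2 := by
      have hdd : (a : ℤ) ∣ (y1 : ℤ) - y2 := by
        have h3 := dvd_sub hd1 hd2
        have e : ((y1 : ℤ) + z1 * L - N0) - ((y2 : ℤ) + z2 * L - N0) =
            ((y1 : ℤ) - y2) + ((z1 : ℤ) - z2) * L := by ring
        rw [e] at h3
        rw [hf] at h3
        have e2 : ((y1 : ℤ) - y2) + ((z2 : ℤ) - z2) * L = (y1 : ℤ) - y2 := by ring
        rwa [e2] at h3
      obtain ⟨e, he⟩ := hdd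
      have hy1a : y1 < a := by omega
      have hy2a : y2 < a := by omega
      have hy1Z : (y1 : ℤ) < a := by exact_mod_cast hy1a
      have hy2Z : (y2 : ℤ) < a := by exact_mod_cast hy2a
      have haZ : (0 : ℤ) < a := by exact_mod_cast ha
      have : e = 0 := by
        rcases lt_trichotomy e 0 with h | h | h
        · exfalso
          have h8 : a * e ≤ a * (-1) := mul_le_mul_of_nonneg_left (by omega) (by linarith)
          linarith [he]
        · exact h
        · exfalso
          have h8 : a * 1 ≤ a * e := mul_le_mul_of_nonneg_left (by omega) (by linarith)
          linarith [he]
      have : (y1 : ℤ) = y2 := by rw [this] at he; linarith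
      exact_mod_cast this
    subst hf; subst hy
    have hx : x1 = x2 := by
      have h4 := h1.trans h2.symm
      dsimp only at h4
      have h3 : x1 * a = x2 * a := by omega
      exact Nat.eq_of_mul_eq_mul_right ha h3
    subst hx; rfl
  · -- upper bound
    intro m hm
    simp only [Set.mem_setOf_eq] at hm
    by_contra hgm
    push_neg at hgm
    have hGm : G + 1 ≤ m + a := by omega
    have hbu : IsUnit (b : ZMod a) := (ZMod.isUnit_iff_coprime b a).mpr hgcd.symm
    set ν : ZMod a := (m : ZMod a) * (b : ZMod a)⁻¹ with hν
    set n : ℕ := ν.val with hn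
    have hna : n < a := ZMod.val_lt ν
    have hnbm : (a : ℤ) ∣ (n : ℤ) * b - m := by
      have h1 : ((n * b : ℕ) : ZMod a) = (m : ZMod a) := by
        push_cast
        have h2 : ((ν.val : ℕ) : ZMod a) = ν := by simp [ZMod.natCast_val, ZMod.cast_id]
        rw [hn, h2, hν, mul_assoc, ZMod.inv_mul_of_unit _ hbu, mul_one]
      have h3 : n * b ≡ m [MOD a] := (ZMod.natCast_eq_natCast_iff _ _ _).mp h1
      have h4 := h3.symm.dvd
      have e : ((n * b : ℕ) : ℤ) = (n : ℤ) * b := by push_cast; ring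
      rwa [e] at h4
    obtain ⟨s, t, hnst, htL⟩ : ∃ s t, s * L + t = n ∧ t < L :=
      ⟨n / L, n % L, Nat.div_add_mod' n L, Nat.mod_lt n hL0⟩
    have hsq : s ≤ q := by
      by_contra hh
      push_neg at hh
      have h3 : (q + 1) * L ≤ s * L := Nat.mul_le_mul_right L hh
      have e : (q + 1) * L = q * L + L := by ring
      omega
    have hstr : s = q → t < r := by
      intro hh
      have e : s * L = q * L := by rw [hh]
      omega
    set t' : ℕ := if t + r < L then t + r else t + r - L with ht'
    set s' : ℕ := if t + r < L then s + q else s + q + 1 with hs'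
    have hs'q : s + q ≤ s' := by rw [hs']; split <;> omega
    have hs'q2 : s' ≤ s + q + 1 := by rw [hs']; split <;> omega
    have ht'sn : t' + s' * L = n + a := by
      rw [ht', hs']
      split
      · have e : (s + q) * L = s * L + q * L := by ring
        omega
      · have e : (s + q + 1) * L = s * L + q * L + L := by ring
        omega
    set Y : ℕ → ℕ := fun j => if j ≤ s then t + j * L else t' + (j - s - 1) * L with hY
    set Z : ℕ → ℕ := fun j => if j ≤ s then s - j else s' - (j - s - 1) with hZ
    have hYZn : ∀ j, j ≤ p → Y j + (Z j) * L = n ∨ Y j + (Z j) * L = n + a := by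
      intro j hj
      simp only [hY, hZ]
      split
      · left
        rename_i hjs
        have e1 : (s - j) * L = s * L - j * L := Nat.sub_mul _ _ _
        have e2 : j * L ≤ s * L := Nat.mul_le_mul_right L hjs
        omega
      · right
        rename_i hjs
        have hj' : j - s - 1 ≤ s' := by omega
        have e1 : (s' - (j - s - 1)) * L = s' * L - (j - s - 1) * L := Nat.sub_mul _ _ _
        have e2 : (j - s - 1) * L ≤ s' * L := Nat.mul_le_mul_right L hj'
        omega
    have hVal : ∀ j, j ≤ p → (Y j) * b + (Z j) * c ≤ G := by
      intro j hj
      simp only [hY, hZ]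
      split
      · rename_i hjs
        rw [val_id t s j hjs]
        by_cases htr : t < r
        · have hr1 : 1 ≤ r := by omega
          have b1 : t * b ≤ (r - 1) * b := Nat.mul_le_mul_right b (by omega)
          have b2 : s * c ≤ q * c := Nat.mul_le_mul_right c hsq
          have b3 : j * (E * a) ≤ p * c := by
            calc j * (E * a) ≤ j * c := Nat.mul_le_mul_left j hEc
            _ ≤ p * c := Nat.mul_le_mul_right c hj
          have e : (q + p) * c = q * c + p * c := by ring
          have hg := hG1 hr1
          omega
        · have hsq1 : s ≤ q - 1 := by
            have := hstr
            omega
          have b1 : t * b ≤ (L - 1) * b := Nat.mul_le_mul_right b (by omega)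
          have b2 : s * c ≤ (q - 1) * c := Nat.mul_le_mul_right c hsq1
          have b3 : j * (E * a) ≤ p * c := by
            calc j * (E * a) ≤ j * c := Nat.mul_le_mul_left j hEc
            _ ≤ p * c := Nat.mul_le_mul_right c hj
          have e : (q + p - 1) * c = (q - 1) * c + p * c := by
            have e2 : q + p - 1 = (q - 1) + p := by omega
            rw [e2, Nat.add_mul]
          omega
      · rename_i hjs
        have hsp : s < p := by omega
        have hj's : j - s - 1 ≤ s' := by omega
        rw [val_id t' s' (j - s - 1) hj's]
        have b3 : (j - s - 1) * (E * a) ≤ (p - s - 1) * c := by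
          calc (j - s - 1) * (E * a) ≤ (j - s - 1) * c := Nat.mul_le_mul_left _ hEc
          _ ≤ (p - s - 1) * c := Nat.mul_le_mul_right c (by omega)
        rw [ht', hs']
        split
        · rename_i htrL
          have b1 : (t + r) * b ≤ (L - 1) * b := Nat.mul_le_mul_right b (by omega)
          have e : (q + p - 1) * c = (s + q) * c + (p - s - 1) * c := by
            have e2 : q + p - 1 = (s + q) + (p - s - 1) := by omega
            rw [e2, Nat.add_mul]
          omega
        · rename_i htrL
          have hr1 : 1 ≤ r := by omega
          have b1 : (t + r - L) * b ≤ (r - 1) * b := Nat.mul_le_mul_right b (by omega)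
          have e : (q + p) * c = (s + q + 1) * c + (p - s - 1) * c := by
            have e2 : q + p = (s + q + 1) + (p - s - 1) := by omega
            rw [e2, Nat.add_mul]
          have hg := hG1 hr1
          omega
    have hZinj : ∀ j1 j2, j1 ≤ p → j2 ≤ p → Z j1 = Z j2 → j1 = j2 := by
      intro j1 j2 hj1 hj2 hz
      simp only [hZ] at hz
      split at hz <;> split at hz <;> omega
    have hvm : ∀ j, j ≤ p →
        (Y j) * b + (Z j) * c ≤ m ∧ (a : ℤ) ∣ (m : ℤ) - ((Y j) * b + (Z j) * c) := by
      intro j hj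
      have h1 := hYZn j hj
      have h2 := hVal j hj
      have hd : (a : ℤ) ∣ (m : ℤ) - ((Y j) * b + (Z j) * c) := by
        have d1 := hdvd_val (Y j) (Z j)
        have d2 : (a : ℤ) ∣ ((Y j : ℤ) + (Z j) * L) * b - (n : ℤ) * b := by
          rcases h1 with h | h
          · have e : (Y j : ℤ) + (Z j) * L = (n : ℤ) := by exact_mod_cast h
            rw [e]; simp
          · have e : (Y j : ℤ) + (Z j) * L = (n : ℤ) + a := by exact_mod_cast h
            rw [e]
            exact ⟨(b : ℤ), by ring⟩
        have e : (m : ℤ) - ((Y j) * b + (Z j) * c) =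
            (((Y j : ℤ) + (Z j) * L) * b - ((Y j) * b + (Z j) * c))
            - (((Y j : ℤ) + (Z j) * L) * b - (n : ℤ) * b) - ((n : ℤ) * b - m) := by
          push_cast; ring
        rw [e]
        exact dvd_sub (dvd_sub d1 d2) hnbm
      refine ⟨?_, hd⟩
      by_contra hmv
      push_neg at hmv
      have h5 : (a : ℤ) ∣ ((Y j) * b + (Z j) * c : ℤ) - m := dvd_sub_comm.mp hd
      have hpos : (0 : ℤ) < ((Y j) * b + (Z j) * c : ℤ) - m := by
        have : (m : ℤ) < ((Y j) * b + (Z j) * c : ℤ) := by exact_mod_cast hmv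
        linarith
      have h6 := Int.le_of_dvd hpos h5
      have h7 : ((Y j) * b + (Z j) * c : ℤ) ≤ (G : ℤ) := by exact_mod_cast h2
      have h8 : (G : ℤ) + 1 ≤ (m : ℤ) + a := by exact_mod_cast hGm
      linarith
    set X : ℕ → ℕ := fun j => (m - ((Y j) * b + (Z j) * c)) / a with hXd
    have hXeq : ∀ j, j ≤ p → (X j) * a + (Y j) * b + (Z j) * c = m := by
      intro j hj
      obtain ⟨h1, h2⟩ := hvm j hj
      have hcast : ((m - ((Y j) * b + (Z j) * c) : ℕ) : ℤ) =
          (m : ℤ) - ((Y j) * b + (Z j) * c) := by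
        push_cast [Nat.cast_sub h1]
        ring
      have hdn : a ∣ (m - ((Y j) * b + (Z j) * c)) := by
        rw [← Int.natCast_dvd_natCast, hcast]
        exact h2
      have h3 := Nat.div_mul_cancel hdn
      simp only [hXd]
      omega
    have hcount := le_reps_of_inj a b c m (p + 1) ha hb hc
      (fun j => ⟨(X j, Y j, Z j), hXeq j (by omega)⟩)
      (by
        intro j1 j2 hf
        have hz : Z j1 = Z j2 := by
          have := congrArg (fun t => t.1.2.2) hf
          simpa using this
        exact Fin.ext (hZinj j1 j2 (by omega) (by omega) hz))
    omega

set_option maxHeartbeats 2000000 in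
theorem stmt_18 (u : ℕ) (hu : 2 ≤ u) (i k p : ℕ) (hi : 2 ≤ i) (hkeven : Even k)
    (hk4 : 4 ≤ k) (hk : k ≤ 2 * i)
    (q r : ℕ) (hq : q = u * pell u (2 * i + 1) / pell u k)
    (hr : (r : ℤ) = (pell u (2 * i + 1) : ℤ) - q * ((pell u k / u : ℕ) : ℤ))
    (hp : p ≤ q) :
    ∃ g : ℕ, IsGreatest {m : ℕ |
        reps (pell u (2 * i + 1)) (pell u (2 * i + 3)) (pell u (2 * i + k + 1)) m ≤ p} g ∧
      ((u * r * pell u (2 * i) : ℤ) >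
          (((pell u (k - 2) / u : ℕ) : ℤ) - (u ^ 2 + 1) * r) * pell u (2 * i + 1) →
        (g : ℤ) = ((r : ℤ) - 1) * pell u (2 * i + 3)
          + ((q : ℤ) + p) * pell u (2 * i + k + 1) - pell u (2 * i + 1)) ∧
      (¬ ((u * r * pell u (2 * i) : ℤ) >
          (((pell u (k - 2) / u : ℕ) : ℤ) - (u ^ 2 + 1) * r) * pell u (2 * i + 1)) →
        (g : ℤ) = (((pell u k / u : ℕ) : ℤ) - 1) * pell u (2 * i + 3)
          + ((q : ℤ) + p - 1) * pell u (2 * i + k + 1) - pell u (2 * i + 1))     := by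
  have hu1 : 1 ≤ u := by omega
  obtain ⟨w, hw⟩ := hkeven
  have hw2 : 2 ≤ w := by omega
  obtain ⟨j, hjk⟩ : ∃ j, k = j + 2 := ⟨k - 2, by omega⟩
  subst hjk
  have hj : j = 2 * (w - 1) := by omega
  simp only [Nat.add_sub_cancel]
  set a := pell u (2 * i + 1) with ha_def
  set b := pell u (2 * i + 3) with hb_def
  set c := pell u (2 * i + (j + 2) + 1) with hc_def
  set L := pell u (j + 2) / u with hL_def
  set E := pell u j / u with hE_def
  -- divisibility
  have hdk : u ∣ pell u (j + 2) := by
    apply Nat.dvd_of_mod_eq_zero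
    rw [show j + 2 = 2 * w from by omega]
    exact (pell_mod u hu w).1
  have hdj : u ∣ pell u j := by
    apply Nat.dvd_of_mod_eq_zero
    rw [hj]
    exact (pell_mod u hu (w - 1)).1
  have huL : u * L = pell u (j + 2) := Nat.mul_div_cancel' hdk
  have huE : u * E = pell u j := Nat.mul_div_cancel' hdj
  -- positivity and monotonicity facts
  have hmono := pell_mono u hu1
  have ha : 0 < a := pell_one_le u hu1 (2 * i)
  have hb : 0 < b := pell_one_le u hu1 (2 * i + 2)
  have hmid : pell u (2 * i + 2) = u * a + pell u (2 * i) := by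
    rw [ha_def]
    exact pell_add_two u (2 * i)
  have hb_rec : b = u * pell u (2 * i + 2) + a := by
    rw [hb_def, ha_def, show 2 * i + 3 = 2 * i + 1 + 2 from by omega]
    exact pell_add_two u (2 * i + 1)
  have hcid : c = pell u (j + 2) * pell u (2 * i + 2) + pell u (j + 1) * a := by
    rw [hc_def, ha_def, show 2 * i + (j + 2) + 1 = (j + 1) + (2 * i + 1) + 1 from by omega]
    exact pell_add u (2 * i + 1) (j + 1)
  have hkrec : pell u (j + 2) = u * pell u (j + 1) + pell u j := pell_add_two u j
  have hkey : pell u (j + 2) * b = u * c + pell u j * a := by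
    rw [hcid, hb_rec, hkrec]
    ring
  have hLb : L * b = c + E * a := by
    apply Nat.eq_of_mul_eq_mul_left (show 0 < u from by omega)
    calc u * (L * b) = (u * L) * b := by ring
    _ = pell u (j + 2) * b := by rw [huL]
    _ = u * c + pell u j * a := hkey
    _ = u * c + (u * E) * a := by rw [huE]
    _ = u * (c + E * a) := by ring
  have hL0 : 0 < L := by
    rcases Nat.eq_zero_or_pos L with h | h
    · exfalso
      have h9 := pell_one_le u hu1 (j + 1)
      rw [show j + 1 + 1 = j + 2 from by omega] at h9
      rw [h, Nat.mul_zero] at huL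
      omega
    · exact h
  have hpell2 : pell u 2 = u := by
    have : pell u 2 = u * pell u 1 + pell u 0 := pell_add_two u 0
    simp [pell] at this
    simp [this, pell]
  have hpell3 : pell u 3 = u * u + 1 := by
    have h3 : pell u 3 = u * pell u 2 + pell u 1 := pell_add_two u 1
    rw [h3, hpell2]
    simp [pell]
  have hL2 : 2 ≤ L := by
    have h4 : pell u 4 = u * pell u 3 + pell u 2 := pell_add_two u 2
    have h5 : pell u 4 ≤ pell u (j + 2) := hmono (by omega)
    have h6 : u * 2 ≤ u * L := by
      rw [huL]
      have : u * 2 ≤ u * pell u 3 := by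
        apply Nat.mul_le_mul_left
        rw [hpell3]
        have h9 := Nat.mul_le_mul hu hu
        omega
      omega
    exact Nat.le_of_mul_le_mul_left h6 (by omega)
  have hE1 : 1 ≤ E := by
    have h5 : pell u 2 ≤ pell u j := hmono (by omega)
    rw [hpell2] at h5
    rcases Nat.eq_zero_or_pos E with h | h
    · rw [h, Nat.mul_zero] at huE; omega
    · exact h
  have hEa1 : 1 ≤ E * a := Nat.one_le_iff_ne_zero.mpr (by positivity)
  have hLa : L ≤ a := by
    have h5 : pell u (j + 2) ≤ a := by rw [ha_def]; exact hmono (by omega)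
    calc L ≤ u * L := Nat.le_mul_of_pos_left L (by omega)
    _ = pell u (j + 2) := huL
    _ ≤ a := h5
  have hq' : q = a / L := by
    rw [hq, ← huL, Nat.mul_div_mul_left a L (by omega)]
  have hqLa : q * L ≤ a := by
    rw [hq']
    exact Nat.div_mul_le_self a L
  have haqr : a = q * L + r := by
    have h5 : (a : ℤ) = q * L + r := by push_cast at hr ⊢; linarith [hr]
    exact_mod_cast h5
  have hrL : r < L := by
    have h6 := Nat.div_add_mod' a L
    rw [← hq'] at h6
    have h7 := Nat.mod_lt a hL0
    omega
  have hq1 : 1 ≤ q := by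
    rw [hq']
    exact (Nat.one_le_div_iff hL0).mpr hLa
  have hEc : E * a ≤ c := by
    have h5 : pell u j * a ≤ c := by
      rw [hcid]
      have h6 : pell u j * a ≤ pell u (j + 1) * a :=
        Nat.mul_le_mul_right a (hmono (by omega))
      omega
    have h7 : u * (E * a) ≤ u * c := by
      calc u * (E * a) = (u * E) * a := by ring
      _ = pell u j * a := by rw [huE]
      _ ≤ c := h5
      _ ≤ u * c := Nat.le_mul_of_pos_left c (by omega)
    exact Nat.le_of_mul_le_mul_left h7 (by omega)
  have hab : a < b := by
    have h5 : 1 ≤ pell u (2 * i + 2) := pell_one_le u hu1 (2 * i + 1)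
    have h6 : 1 ≤ u * pell u (2 * i + 2) := by
      calc 1 = 1 * 1 := rfl
      _ ≤ u * pell u (2 * i + 2) := Nat.mul_le_mul (by omega) h5
    omega
  have hgcd : Nat.Coprime a b := by
    have h1 : Nat.Coprime a (pell u (2 * i)) := (pell_coprime u (2 * i)).symm
    have h2 : Nat.Coprime a u := by
      have h3 : a % u = 1 := (pell_mod u hu i).2
      rw [Nat.coprime_comm]
      unfold Nat.Coprime
      rw [Nat.gcd_rec, h3, Nat.gcd_one_left]
    have h4 : b = u * pell u (2 * i) + a * (u * u + 1) := by
      rw [hb_rec, hmid]; ring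
    rw [h4]
    exact (Nat.coprime_add_mul_left_right a (u * pell u (2 * i)) (u * u + 1)).mpr
      (h2.mul_right h1)
  -- condition equivalence
  have hbz : (b : ℤ) = ((u : ℤ) ^ 2 + 1) * a + u * pell u (2 * i) := by
    have e : b = u * u * a + u * pell u (2 * i) + a := by rw [hb_rec, hmid]; ring
    rw [e]; push_cast; ring
  have hkeyZ : (r : ℤ) * b - E * a =
      (u : ℤ) * r * pell u (2 * i) - ((E : ℤ) - ((u : ℤ) ^ 2 + 1) * r) * a := by
    rw [hbz]; ring
  have hcond_iff : ((u : ℤ) * r * pell u (2 * i) >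
      ((E : ℤ) - ((u : ℤ) ^ 2 + 1) * r) * a) ↔ (E * a < r * b) := by
    constructor
    · intro h
      have h5 : ((E * a : ℕ) : ℤ) < ((r * b : ℕ) : ℤ) := by push_cast; linarith [hkeyZ]
      exact_mod_cast h5
    · intro h
      have h5 : ((E * a : ℕ) : ℤ) < ((r * b : ℕ) : ℤ) := by exact_mod_cast h
      push_cast at h5
      linarith [hkeyZ]
  have haEa : a ≤ E * a := by
    calc a = 1 * a := (one_mul a).symm
    _ ≤ E * a := Nat.mul_le_mul_right a hE1
  by_cases hcase : E * a < r * b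
  · -- case 1
    have hr1 : 1 ≤ r := by
      by_contra hh
      push_neg at hh
      have : r = 0 := by omega
      rw [this, Nat.zero_mul] at hcase
      omega
    have hG2 : (L - 1) * b + (q + p - 1) * c ≤ (r - 1) * b + (q + p) * c := by
      have hLbZ : (L : ℤ) * b = c + E * a := by exact_mod_cast hLb
      have hcaseZ : (E : ℤ) * a < r * b := by exact_mod_cast hcase
      zify [show 1 ≤ L from by omega, hr1, show 1 ≤ q + p from by omega]
      have hrLZ : (r : ℤ) ≤ L := by exact_mod_cast le_of_lt hrL
      linarith only [hLbZ, hcaseZ, hrLZ]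
    have haG : a ≤ (r - 1) * b + (q + p) * c := by
      have h5 : a ≤ c := le_trans haEa hEc
      have h6 : c ≤ (q + p) * c := by
        calc c = 1 * c := (one_mul c).symm
        _ ≤ (q + p) * c := Nat.mul_le_mul_right c (by omega)
      omega
    refine ⟨(r - 1) * b + (q + p) * c - a, ?_, ?_, ?_⟩
    · apply abstract_isg a b c L E q r p (r - 1) (q + p) ha hab hgcd hLb haqr hrL hL2
        hEc hEa1 hq1 hp (by omega) (fun _ => le_refl _) hG2
      have e : (q + p) * L = q * L + p * L := by ring
      omega
    · intro _
      push_cast [Nat.cast_sub haG, Nat.cast_sub hr1]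
      ring
    · intro hnot
      exact absurd (hcond_iff.mpr hcase) hnot
  · -- case 2
    push_neg at hcase
    have hG1 : 1 ≤ r → (r - 1) * b + (q + p) * c ≤ (L - 1) * b + (q + p - 1) * c := by
      intro hr1
      have hLbZ : (L : ℤ) * b = c + E * a := by exact_mod_cast hLb
      have hcaseZ : (r : ℤ) * b ≤ E * a := by exact_mod_cast hcase
      zify [show 1 ≤ L from by omega, hr1, show 1 ≤ q + p from by omega]
      have hrLZ : (r : ℤ) ≤ L := by exact_mod_cast le_of_lt hrL
      linarith only [hLbZ, hcaseZ, hrLZ]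
    have haG : a ≤ (L - 1) * b + (q + p - 1) * c := by
      have h5 : b ≤ (L - 1) * b := by
        calc b = 1 * b := (one_mul b).symm
        _ ≤ (L - 1) * b := Nat.mul_le_mul_right b (by omega)
      omega
    refine ⟨(L - 1) * b + (q + p - 1) * c - a, ?_, ?_, ?_⟩
    · apply abstract_isg a b c L E q r p (L - 1) (q + p - 1) ha hab hgcd hLb haqr hrL hL2
        hEc hEa1 hq1 hp (by omega) hG1 (le_refl _)
      have e1 : (q + p) * L = q * L + p * L := by ring
      have e2 : (q + p - 1) * L = (q + p) * L - 1 * L := Nat.sub_mul _ _ _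
      omega
    · intro hcond
      exact absurd (hcond_iff.mp hcond) (by omega)
    · intro _
      push_cast [Nat.cast_sub haG, Nat.cast_sub (show 1 ≤ L from by omega),
        Nat.cast_sub (show 1 ≤ q + p from by omega)]
      ring
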